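/- Let m ∈ ℝ, v > 0, let γ be the Gaussian probability measure on ℝ with mean m and variance v, and let f : ℝ → ℝ be square integrable with respect to γ. Then for every r ≥ |m|, |∫_{{y : |y| > r}} f(y) dγ(y)| ≤ √2 · (∫_ℝ f(y)² dγ(y))^{1/2} · exp(−(r − |m|)² / (4v)). -/

import Mathlib

open MeasureTheory ProbabilityTheory Real

/-- Chernoff-type bound: if on a set `s` we have `(c-m)² + (x-c)² ≤ (x-m)²`, then the
Gaussian measure of `s` is at most `exp(-(c-m)²/(2v))`. -/
lemma gaussian_set_bound (m c : ℝ) (v : NNReal) (hv : v ≠ 0) {s : Set ℝ}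
    (hs : MeasurableSet s)
    (h : ∀ x ∈ s, (c - m) ^ 2 + (x - c) ^ 2 ≤ (x - m) ^ 2) :
    gaussianReal m v s ≤ ENNReal.ofReal (Real.exp (-(c - m) ^ 2 / (2 * v))) := by
  have hv' : (0 : ℝ) < (v : ℝ) := by exact_mod_cast hv.bot_lt
  have h2v : (0 : ℝ) < 2 * (v : ℝ) := by linarith
  have hpt : ∀ x ∈ s, gaussianPDF m v x
      ≤ ENNReal.ofReal (Real.exp (-(c - m) ^ 2 / (2 * v))) * gaussianPDF c v x := by
    intro x hx
    rw [gaussianPDF, gaussianPDF, ← ENNReal.ofReal_mul (Real.exp_pos _).le]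
    apply ENNReal.ofReal_le_ofReal
    rw [gaussianPDFReal, gaussianPDFReal]
    rw [show Real.exp (-(c - m) ^ 2 / (2 * v)) *
        ((√(2 * π * v))⁻¹ * Real.exp (-(x - c) ^ 2 / (2 * v)))
        = (√(2 * π * v))⁻¹ *
          (Real.exp (-(c - m) ^ 2 / (2 * v)) * Real.exp (-(x - c) ^ 2 / (2 * v))) by ring]
    have hinv : (0 : ℝ) ≤ (√(2 * π * v))⁻¹ := by positivity
    apply mul_le_mul_of_nonneg_left _ hinv
    rw [← Real.exp_add, Real.exp_le_exp]
    rw [← add_div, div_le_div_iff₀ h2v h2v]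
    have := h x hx
    nlinarith
  calc gaussianReal m v s = ∫⁻ x in s, gaussianPDF m v x := gaussianReal_apply m hv s
    _ ≤ ∫⁻ x in s, ENNReal.ofReal (Real.exp (-(c - m) ^ 2 / (2 * v))) * gaussianPDF c v x :=
        setLIntegral_mono ((measurable_gaussianPDF c v).const_mul _) hpt
    _ = ENNReal.ofReal (Real.exp (-(c - m) ^ 2 / (2 * v))) * ∫⁻ x in s, gaussianPDF c v x :=
        lintegral_const_mul _ (measurable_gaussianPDF c v)
    _ ≤ ENNReal.ofReal (Real.exp (-(c - m) ^ 2 / (2 * v))) * 1 := by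
        gcongr
        rw [← gaussianReal_apply c hv s]
        exact prob_le_one
    _ = ENNReal.ofReal (Real.exp (-(c - m) ^ 2 / (2 * v))) := mul_one _

/-- Gaussian-tail truncation estimate (Cauchy–Schwarz + Chernoff): for `f` square
integrable with respect to the Gaussian measure `γ` with mean `m` and variance `v > 0`,
and any `r ≥ |m|`,
`|∫_{|y|>r} f dγ| ≤ √2 (∫ f² dγ)^{1/2} exp(−(r−|m|)²/(4v))`. -/
theorem stmt_4 (m : ℝ) (v : NNReal) (hv : 0 < v) (f : ℝ → ℝ)
    (hf : Integrable (fun y => f y ^ 2) (gaussianReal m v))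
    (r : ℝ) (hr : |m| ≤ r) :
    |∫ y in {y : ℝ | |y| > r}, f y ∂(gaussianReal m v)|
      ≤ Real.sqrt 2 * Real.sqrt (∫ y, f y ^ 2 ∂(gaussianReal m v)) *
          Real.exp (-(r - |m|) ^ 2 / (4 * v)) := by
  have hvne : v ≠ 0 := hv.ne'
  have hv' : (0 : ℝ) < (v : ℝ) := by exact_mod_cast hv
  set μ := gaussianReal m v with hμ
  set S : Set ℝ := {y : ℝ | |y| > r} with hS
  have hrm : 0 ≤ r - |m| := by linarith
  have hSm : MeasurableSet S := measurableSet_lt measurable_const measurable_abs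
  have hRHSnn : 0 ≤ Real.sqrt 2 * Real.sqrt (∫ y, f y ^ 2 ∂μ) *
      Real.exp (-(r - |m|) ^ 2 / (4 * v)) := by positivity
  -- measure bound for the tail set
  have hSsub : S = Set.Iio (-r) ∪ Set.Ioi r := by
    ext x
    simp only [hS, Set.mem_setOf_eq, gt_iff_lt, lt_abs, Set.mem_union, Set.mem_Iio, Set.mem_Ioi]
    constructor
    · rintro (h | h)
      · exact Or.inr h
      · exact Or.inl (by linarith)
    · rintro (h | h)
      · exact Or.inr (by linarith)
      · exact Or.inl h
  have hIoi : μ (Set.Ioi r) ≤ ENNReal.ofReal (Real.exp (-(r - |m|) ^ 2 / (2 * v))) := by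
    refine le_trans (gaussian_set_bound m r v hvne measurableSet_Ioi fun x hx => ?_) ?_
    · have hx' : r < x := hx
      have hm : m ≤ |m| := le_abs_self m
      nlinarith
    · apply ENNReal.ofReal_le_ofReal
      rw [Real.exp_le_exp]
      have hm : m ≤ |m| := le_abs_self m
      have h2v : (0 : ℝ) < 2 * (v : ℝ) := by linarith
      rw [div_le_div_iff₀ h2v h2v]
      nlinarith [mul_le_mul_of_nonneg_right (show (r - |m|) ^ 2 ≤ (r - m) ^ 2 by nlinarith) h2v.le]
  have hIio : μ (Set.Iio (-r)) ≤ ENNReal.ofReal (Real.exp (-(r - |m|) ^ 2 / (2 * v))) := by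
    refine le_trans (gaussian_set_bound m (-r) v hvne measurableSet_Iio fun x hx => ?_) ?_
    · have hx' : x < -r := hx
      have hm : -m ≤ |m| := neg_le_abs m
      nlinarith
    · apply ENNReal.ofReal_le_ofReal
      rw [Real.exp_le_exp]
      have hm : -m ≤ |m| := neg_le_abs m
      have h2v : (0 : ℝ) < 2 * (v : ℝ) := by linarith
      rw [div_le_div_iff₀ h2v h2v]
      nlinarith [mul_le_mul_of_nonneg_right (show (r - |m|) ^ 2 ≤ (-r - m) ^ 2 by nlinarith) h2v.le]
  have hmeas : μ S ≤ ENNReal.ofReal (2 * Real.exp (-(r - |m|) ^ 2 / (2 * v))) := by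
    rw [hSsub]
    refine le_trans (measure_union_le _ _) ?_
    refine le_trans (add_le_add hIio hIoi) ?_
    rw [← ENNReal.ofReal_add (Real.exp_pos _).le (Real.exp_pos _).le]
    apply ENNReal.ofReal_le_ofReal
    ring_nf
    exact le_refl _
  have hmeasR : (μ S).toReal ≤ 2 * Real.exp (-(r - |m|) ^ 2 / (2 * v)) :=
    ENNReal.toReal_le_of_le_ofReal (by positivity) hmeas
  by_cases hfi : Integrable f (μ.restrict S)
  · -- Cauchy–Schwarz
    have hf2S : Integrable (fun y => f y ^ 2) (μ.restrict S) := hf.restrict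
    have habs : AEStronglyMeasurable (fun y => |f y|) (μ.restrict S) :=
      hfi.abs.aestronglyMeasurable
    have hmem : MemLp (fun y => |f y|) 2 (μ.restrict S) :=
      (memLp_two_iff_integrable_sq habs).2 (by simpa [sq_abs] using hf2S)
    have hmem1 : MemLp (fun _ : ℝ => (1 : ℝ)) 2 (μ.restrict S) := memLp_const 1
    have hpq : Real.HolderConjugate 2 2 := Real.HolderConjugate.two_two
    have hCS := integral_mul_le_Lp_mul_Lq_of_nonneg hpq
      (f := fun y => |f y|) (g := fun _ => (1 : ℝ)) (μ := μ.restrict S)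
      (Filter.Eventually.of_forall fun y => abs_nonneg _)
      (Filter.Eventually.of_forall fun y => zero_le_one)
      (by simpa using hmem) (by simpa using hmem1)
    simp only [mul_one] at hCS
    have hint1 : ∫ _ : ℝ, (1 : ℝ) ^ (2 : ℝ) ∂(μ.restrict S) = (μ S).toReal := by
      simp [Measure.restrict_apply_univ, Measure.real]
    have hintsq : ∫ y, |f y| ^ (2 : ℝ) ∂(μ.restrict S) = ∫ y, f y ^ 2 ∂(μ.restrict S) := by
      refine integral_congr_ae (Filter.Eventually.of_forall fun y => ?_)
      show |f y| ^ (2 : ℝ) = f y ^ 2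
      rw [Real.rpow_two, sq_abs]
    rw [hint1, hintsq] at hCS
    have habs_int : |∫ y in S, f y ∂μ| ≤ ∫ y in S, |f y| ∂μ := by
      simpa [Real.norm_eq_abs] using norm_integral_le_integral_norm (μ := μ.restrict S) f
    have hS2 : ∫ y in S, f y ^ 2 ∂μ ≤ ∫ y, f y ^ 2 ∂μ :=
      integral_mono_measure Measure.restrict_le_self
        (Filter.Eventually.of_forall fun y => sq_nonneg _) hf
    have hsqa : (∫ y in S, f y ^ 2 ∂μ) ^ ((1 : ℝ) / 2) ≤ Real.sqrt (∫ y, f y ^ 2 ∂μ) := by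
      rw [← Real.sqrt_eq_rpow]
      exact Real.sqrt_le_sqrt hS2
    have hsqb : ((μ S).toReal) ^ ((1 : ℝ) / 2)
        ≤ Real.sqrt 2 * Real.exp (-(r - |m|) ^ 2 / (4 * v)) := by
      rw [← Real.sqrt_eq_rpow]
      refine le_trans (Real.sqrt_le_sqrt hmeasR) ?_
      rw [Real.sqrt_mul (by norm_num : (0:ℝ) ≤ 2), ← Real.exp_half]
      have : (-(r - |m|) ^ 2 / (2 * v)) / 2 = -(r - |m|) ^ 2 / (4 * v) := by
        rw [div_div]; norm_num; ring_nf
      rw [this]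
    calc |∫ y in S, f y ∂μ| ≤ ∫ y in S, |f y| ∂μ := habs_int
      _ ≤ (∫ y in S, f y ^ 2 ∂μ) ^ ((1 : ℝ) / 2) * ((μ S).toReal) ^ ((1 : ℝ) / 2) := hCS
      _ ≤ Real.sqrt (∫ y, f y ^ 2 ∂μ) *
          (Real.sqrt 2 * Real.exp (-(r - |m|) ^ 2 / (4 * v))) := by
          apply mul_le_mul hsqa hsqb (by positivity) (Real.sqrt_nonneg _)
      _ = Real.sqrt 2 * Real.sqrt (∫ y, f y ^ 2 ∂μ) *
          Real.exp (-(r - |m|) ^ 2 / (4 * v)) := by ring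
  · rw [integral_undef hfi]
    simpa using hRHSnn
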